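/- Every n-player m-action game admits a k-uniform distribution on A = [m]^n that is an ε-coarse correlated equilibrium, for every ε ∈ (0,1) and every integer k > (2/ε²)(ln m + ln n). -/

import Mathlib

open Finset

open scoped Classical

noncomputable section

/-- `x` is a probability distribution on the finite type `A`. -/
def IsDist {A : Type*} [Fintype A] (x : A → ℝ) : Prop :=
  (∀ a, 0 ≤ x a) ∧ ∑ a, x a = 1

/-- Empirical distribution of `k` sampled elements of `A`. -/
def empJoint {A : Type*} [Fintype A] [DecidableEq A] (k : ℕ) (a : Fin k → A) : A → ℝ :=
  fun p => ((univ.filter fun t => a t = p).card : ℝ) / k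

/-- Probability of the event `E` over `k` i.i.d. samples from the distribution `x`. -/
def PrJoint {A : Type*} [Fintype A] (k : ℕ) (x : A → ℝ) (E : (Fin k → A) → Prop) : ℝ :=
  ∑ a : Fin k → A, if E a then ∏ t, x (a t) else 0

/-- `x ∈ Δ(A)` is an `ε`-coarse correlated equilibrium of the game `u`:
for every player `i` and action `j`, the expected regret for not playing `j`
is at most `ε`. -/
def IsCCE {n m : ℕ} (u : Fin n → (Fin n → Fin m) → ℝ)
    (x : (Fin n → Fin m) → ℝ) (ε : ℝ) : Prop :=
  ∀ (i : Fin n) (j : Fin m),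
    ∑ a : Fin n → Fin m, x a * (u i (Function.update a i j) - u i a) ≤ ε

/-- `x ∈ Δ(A)` is an `ε`-correlated equilibrium of the game `u`:
for every player `i` and deviation map `f : [m] → [m]`, the expected regret is
at most `ε`. -/
def IsCE {n m : ℕ} (u : Fin n → (Fin n → Fin m) → ℝ)
    (x : (Fin n → Fin m) → ℝ) (ε : ℝ) : Prop :=
  ∀ (i : Fin n) (f : Fin m → Fin m),
    ∑ a : Fin n → Fin m, x a * (u i (Function.update a i (f (a i))) - u i a) ≤ ε

/-- A distribution on a finite set is `k`-uniform if every probability is an integer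
multiple of `1/k` (equivalently, it is uniform over a size-`k` multiset). -/
def IsKUniform {A : Type*} [Fintype A] (k : ℕ) (x : A → ℝ) : Prop :=
  ∀ a, ∃ c : ℕ, x a = (c : ℝ) / k

namespace Stmt6Aux

open Real

variable {n m : ℕ}

/-- Product distribution on profiles. -/
def Pd (q : Fin n → Fin m → ℝ) : (Fin n → Fin m) → ℝ := fun a => ∏ i, q i (a i)

lemma Pd_nonneg {q : Fin n → Fin m → ℝ} (hq : ∀ i j, 0 ≤ q i j) (a : Fin n → Fin m) :
    0 ≤ Pd q a :=
  Finset.prod_nonneg fun i _ => hq i (a i)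

lemma sum_Pd {q : Fin n → Fin m → ℝ} (hq : ∀ i, ∑ j, q i j = 1) :
    ∑ a : Fin n → Fin m, Pd q a = 1 := by
  unfold Pd
  rw [← Fintype.prod_sum]
  simp [hq]

def recomb (i : Fin n) (j : Fin m) (b : {l : Fin n // l ≠ i} → Fin m) : Fin n → Fin m :=
  (Equiv.funSplitAt i (Fin m)).symm (j, b)

lemma recomb_self (i : Fin n) (j : Fin m) (b : {l : Fin n // l ≠ i} → Fin m) :
    recomb i j b i = j := by simp [recomb]

lemma recomb_ne (i : Fin n) {l : Fin n} (h : l ≠ i) (j : Fin m)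
    (b : {l : Fin n // l ≠ i} → Fin m) : recomb i j b l = b ⟨l, h⟩ := by
  simp [recomb, h]

lemma update_recomb (i : Fin n) (j j' : Fin m) (b : {l : Fin n // l ≠ i} → Fin m) :
    Function.update (recomb i j' b) i j = recomb i j b := by
  funext l
  rcases eq_or_ne l i with rfl | h
  · simp [recomb_self]
  · simp [Function.update_of_ne h, recomb_ne _ h]

lemma sum_split (i : Fin n) (f : (Fin n → Fin m) → ℝ) :
    ∑ a, f a = ∑ j : Fin m, ∑ b : {l : Fin n // l ≠ i} → Fin m, f (recomb i j b) := by
  have h := Equiv.sum_comp (Equiv.funSplitAt i (Fin m)).symm f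
  rw [Fintype.sum_prod_type] at h
  exact h.symm

lemma Pd_recomb (i : Fin n) (q : Fin n → Fin m → ℝ) (j : Fin m)
    (b : {l : Fin n // l ≠ i} → Fin m) :
    Pd q (recomb i j b) = q i j * ∏ l : {l : Fin n // l ≠ i}, q l (b l) := by
  unfold Pd
  rw [← Finset.mul_prod_erase Finset.univ _ (Finset.mem_univ i), recomb_self]
  congr 1
  rw [Finset.prod_subtype (Finset.univ.erase i) (p := fun l => l ≠ i) (by simp)]
  exact Finset.prod_congr rfl fun l _ => by rw [recomb_ne i l.2, Subtype.coe_eta]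

lemma marg (q : Fin n → Fin m → ℝ) (hq : ∀ i', ∑ j, q i' j = 1) (i : Fin n)
    (F : (Fin n → Fin m) → ℝ) :
    ∑ a, Pd q a * F a = ∑ j, q i j * ∑ a, Pd q a * F (Function.update a i j) := by
  have key : ∀ j : Fin m, ∑ a, Pd q a * F (Function.update a i j)
      = ∑ b : {l : Fin n // l ≠ i} → Fin m,
          (∏ l : {l : Fin n // l ≠ i}, q l.1 (b l)) * F (recomb i j b) := by
    intro j
    rw [sum_split i]
    have h2 : ∀ (j' : Fin m) (b : {l : Fin n // l ≠ i} → Fin m),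
        Pd q (recomb i j' b) * F (Function.update (recomb i j' b) i j)
        = q i j' * ((∏ l : {l : Fin n // l ≠ i}, q l.1 (b l)) * F (recomb i j b)) := by
      intro j' b; rw [Pd_recomb, update_recomb, mul_assoc]
    simp_rw [h2]
    rw [← Finset.sum_mul_sum, hq i, one_mul]
  simp_rw [key, sum_split i (fun a => Pd q a * F a), Pd_recomb, mul_assoc, Finset.mul_sum]

section MWU

variable (u : Fin n → (Fin n → Fin m) → ℝ) (η : ℝ)

/-- Expected payoff to player `i` when deviating to `j`. -/
def gain (q : Fin n → Fin m → ℝ) (i : Fin n) (j : Fin m) : ℝ :=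
  ∑ a, Pd q a * u i (Function.update a i j)

/-- Exponential-weights distribution. -/
def pdist (w : Fin n → Fin m → ℝ) (i : Fin n) (j : Fin m) : ℝ :=
  Real.exp (η * w i j) / ∑ j', Real.exp (η * w i j')

/-- Cumulative gains of MWU dynamics. -/
def G : ℕ → Fin n → Fin m → ℝ
  | 0 => fun _ _ => 0
  | (t+1) => fun i j => G t i j + gain u (pdist η (G t)) i j

def p (t : ℕ) : Fin n → Fin m → ℝ := pdist η (G u η t)
def g (t : ℕ) : Fin n → Fin m → ℝ := gain u (p u η t)
def W (t : ℕ) (i : Fin n) : ℝ := ∑ j, Real.exp (η * G u η t i j)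
def IP (t : ℕ) (i : Fin n) : ℝ := ∑ j, p u η t i j * g u η t i j

lemma sumexp_pos (hm : 0 < m) (w : Fin n → Fin m → ℝ) (i : Fin n) :
    0 < ∑ j', Real.exp (η * w i j') := by
  have : Nonempty (Fin m) := ⟨⟨0, hm⟩⟩
  exact Finset.sum_pos (fun j _ => Real.exp_pos _) Finset.univ_nonempty

lemma pdist_nonneg (hm : 0 < m) (w : Fin n → Fin m → ℝ) (i : Fin n) (j : Fin m) :
    0 ≤ pdist η w i j :=
  div_nonneg (Real.exp_pos _).le (sumexp_pos η hm w i).le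

lemma pdist_sum (hm : 0 < m) (w : Fin n → Fin m → ℝ) (i : Fin n) :
    ∑ j, pdist η w i j = 1 := by
  unfold pdist
  rw [← Finset.sum_div, div_self (sumexp_pos η hm w i).ne']

lemma p_nonneg (hm : 0 < m) (t : ℕ) (i : Fin n) (j : Fin m) : 0 ≤ p u η t i j :=
  pdist_nonneg η hm _ i j

lemma p_sum (hm : 0 < m) (t : ℕ) (i : Fin n) : ∑ j, p u η t i j = 1 :=
  pdist_sum η hm _ i

lemma gain_mem (hu : ∀ i a, 0 ≤ u i a ∧ u i a ≤ 1) (q : Fin n → Fin m → ℝ)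
    (hq0 : ∀ i j, 0 ≤ q i j) (hq1 : ∀ i, ∑ j, q i j = 1) (i : Fin n) (j : Fin m) :
    0 ≤ gain u q i j ∧ gain u q i j ≤ 1 := by
  constructor
  · exact Finset.sum_nonneg fun a _ => mul_nonneg (Pd_nonneg hq0 a) (hu i _).1
  · calc ∑ a, Pd q a * u i (Function.update a i j) ≤ ∑ a, Pd q a := by
          apply Finset.sum_le_sum
          intro a _
          exact mul_le_of_le_one_right (Pd_nonneg hq0 a) (hu i _).2
      _ = 1 := sum_Pd hq1

lemma g_mem (hm : 0 < m) (hu : ∀ i a, 0 ≤ u i a ∧ u i a ≤ 1) (t : ℕ) (i : Fin n)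
    (j : Fin m) : 0 ≤ g u η t i j ∧ g u η t i j ≤ 1 :=
  gain_mem u hu _ (p_nonneg u η hm t) (p_sum u η hm t) i j

lemma exp_eq_p_mul_W (hm : 0 < m) (t : ℕ) (i : Fin n) (j : Fin m) :
    Real.exp (η * G u η t i j) = p u η t i j * W u η t i := by
  unfold p pdist W
  rw [div_mul_eq_mul_div, mul_div_assoc,
    div_self (sumexp_pos η hm (G u η t) i).ne', mul_one]

lemma W_zero (i : Fin n) : W u η 0 i = m := by
  unfold W
  simp [G]

lemma W_pos (hm : 0 < m) (t : ℕ) (i : Fin n) : 0 < W u η t i :=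
  sumexp_pos η hm (G u η t) i

lemma exp_quad {y : ℝ} (h0 : 0 ≤ y) (h1 : y ≤ 1) :
    Real.exp y ≤ 1 + y + 3/4 * y^2 := by
  have hb := Real.exp_bound (n := 2) (x := y) (by rw [abs_of_nonneg h0]; exact h1)
    (by norm_num)
  have h2 : |Real.exp y - (1 + y)| ≤ y ^ 2 * (3/4) := by
    convert hb using 2
    · simp [Finset.sum_range_succ]
    · rw [abs_of_nonneg h0]
    · norm_num [Nat.factorial]
  have := (abs_sub_le_iff.mp h2).1
  linarith

lemma W_step (hm : 0 < m) (hu : ∀ i a, 0 ≤ u i a ∧ u i a ≤ 1)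
    (hη : 0 ≤ η ∧ η ≤ 1) (t : ℕ) (i : Fin n) :
    W u η (t+1) i ≤ W u η t i * Real.exp (η * IP u η t i + 3/4 * η^2) := by
  have hG1 : ∀ j, G u η (t+1) i j = G u η t i j + g u η t i j := fun j => rfl
  have step1 : W u η (t+1) i ≤ ∑ j, Real.exp (η * G u η t i j) *
      (1 + η * g u η t i j + 3/4 * (η * g u η t i j)^2) := by
    unfold W
    apply Finset.sum_le_sum
    intro j _
    rw [hG1, mul_add, Real.exp_add]
    apply mul_le_mul_of_nonneg_left _ (Real.exp_pos _).le
    apply exp_quad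
    · exact mul_nonneg hη.1 (g_mem u η hm hu t i j).1
    · exact mul_le_one₀ hη.2 (g_mem u η hm hu t i j).1 (g_mem u η hm hu t i j).2
  have expand : ∀ j : Fin m, Real.exp (η * G u η t i j) *
      (1 + η * g u η t i j + 3/4 * (η * g u η t i j)^2)
      = W u η t i * (p u η t i j + η * (p u η t i j * g u η t i j)
        + 3/4 * η^2 * (p u η t i j * (g u η t i j)^2)) := by
    intro j
    rw [exp_eq_p_mul_W u η hm]
    ring
  have hS : ∑ j, p u η t i j * (g u η t i j)^2 ≤ 1 := by
    calc ∑ j, p u η t i j * (g u η t i j)^2 ≤ ∑ j, p u η t i j := by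
          apply Finset.sum_le_sum
          intro j _
          exact mul_le_of_le_one_right (p_nonneg u η hm t i j)
            (pow_le_one₀ (g_mem u η hm hu t i j).1 (g_mem u η hm hu t i j).2)
      _ = 1 := p_sum u η hm t i
  calc W u η (t+1) i
      ≤ ∑ j, Real.exp (η * G u η t i j) *
        (1 + η * g u η t i j + 3/4 * (η * g u η t i j)^2) := step1
    _ = W u η t i * (1 + η * IP u η t i
        + 3/4 * η^2 * ∑ j, p u η t i j * (g u η t i j)^2) := by
        simp_rw [expand, ← Finset.mul_sum]
        congr 1
        rw [Finset.sum_add_distrib, Finset.sum_add_distrib, ← Finset.mul_sum,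
          ← Finset.mul_sum, p_sum u η hm t i]
        rfl
    _ ≤ W u η t i * (1 + (η * IP u η t i + 3/4 * η^2)) := by
        apply mul_le_mul_of_nonneg_left _ (W_pos u η hm t i).le
        have h34 : (0:ℝ) ≤ 3/4 * η^2 := by positivity
        nlinarith [hS]
    _ ≤ W u η t i * Real.exp (η * IP u η t i + 3/4 * η^2) := by
        apply mul_le_mul_of_nonneg_left _ (W_pos u η hm t i).le
        rw [add_comm (1:ℝ)]
        exact Real.add_one_le_exp _

lemma W_bound (hm : 0 < m) (hu : ∀ i a, 0 ≤ u i a ∧ u i a ≤ 1)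
    (hη : 0 ≤ η ∧ η ≤ 1) (T : ℕ) (i : Fin n) :
    W u η T i ≤ m * Real.exp (η * ∑ t ∈ Finset.range T, IP u η t i + 3/4 * η^2 * T) := by
  induction T with
  | zero => simp [W_zero]
  | succ T ih =>
    calc W u η (T+1) i ≤ W u η T i * Real.exp (η * IP u η T i + 3/4 * η^2) :=
          W_step u η hm hu hη T i
      _ ≤ (m * Real.exp (η * ∑ t ∈ Finset.range T, IP u η t i + 3/4 * η^2 * T))
          * Real.exp (η * IP u η T i + 3/4 * η^2) := by
          apply mul_le_mul_of_nonneg_right ih (Real.exp_pos _).le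
      _ = m * Real.exp (η * ∑ t ∈ Finset.range (T+1), IP u η t i
            + 3/4 * η^2 * ((T+1 : ℕ) : ℝ)) := by
          rw [mul_assoc, ← Real.exp_add, Finset.sum_range_succ]
          push_cast
          ring

lemma G_eq_sum (T : ℕ) (i : Fin n) (j : Fin m) :
    G u η T i j = ∑ t ∈ Finset.range T, g u η t i j := by
  induction T with
  | zero => simp [G]
  | succ T ih => rw [Finset.sum_range_succ, ← ih]; rfl

lemma regret_sum_bound (hm : 0 < m) (hu : ∀ i a, 0 ≤ u i a ∧ u i a ≤ 1)
    (hη : 0 < η ∧ η ≤ 1) (T : ℕ) (i : Fin n) (j : Fin m) :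
    ∑ t ∈ Finset.range T, g u η t i j - ∑ t ∈ Finset.range T, IP u η t i
      ≤ Real.log m / η + 3/4 * η * T := by
  have hW : Real.exp (η * G u η T i j) ≤ W u η T i :=
    Finset.single_le_sum (f := fun j' => Real.exp (η * G u η T i j'))
      (fun j' _ => (Real.exp_pos _).le) (Finset.mem_univ j)
  have hWb := W_bound u η hm hu ⟨hη.1.le, hη.2⟩ T i
  have hmR : (0:ℝ) < m := by exact_mod_cast hm
  have key : Real.exp (η * G u η T i j)
      ≤ Real.exp (Real.log m + (η * ∑ t ∈ Finset.range T, IP u η t i + 3/4 * η^2 * T)) := by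
    rw [Real.exp_add, Real.exp_log hmR]
    exact hW.trans hWb
  have h2 := Real.exp_le_exp.mp key
  rw [G_eq_sum] at h2
  have h3 : η * (∑ t ∈ Finset.range T, g u η t i j - ∑ t ∈ Finset.range T, IP u η t i)
      ≤ Real.log m + 3/4 * η^2 * T := by nlinarith
  rw [div_add' _ _ _ hη.1.ne', le_div_iff₀ hη.1]
  nlinarith [h3]

lemma exists_approx_cce (hm : 0 < m) (hu : ∀ i a, 0 ≤ u i a ∧ u i a ≤ 1)
    {δ : ℝ} (hδ : 0 < δ) (hδ1 : δ ≤ 1) :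
    ∃ x : (Fin n → Fin m) → ℝ, IsDist x ∧
      ∀ i j, ∑ a, x a * (u i (Function.update a i j) - u i a) ≤ δ := by
  set η : ℝ := δ/2 with hηdef
  have hη : 0 < η ∧ η ≤ 1 := ⟨by positivity, by rw [hηdef]; linarith⟩
  set T : ℕ := ⌈4 * Real.log m / δ^2⌉₊ + 1 with hTdef
  have hTpos : (0:ℝ) < T := by positivity
  have hlog : 0 ≤ Real.log m := Real.log_nonneg (by exact_mod_cast hm)
  have hT4 : 4 * Real.log m / δ^2 ≤ (T:ℝ) := by
    calc 4 * Real.log m / δ^2 ≤ (⌈4 * Real.log m / δ^2⌉₊ : ℝ) := Nat.le_ceil _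
      _ ≤ (T:ℝ) := by rw [hTdef]; push_cast; linarith
  have hT4' : 4 * Real.log m ≤ δ^2 * T := by
    rw [div_le_iff₀ (by positivity : (0:ℝ) < δ^2)] at hT4
    linarith [hT4]
  refine ⟨fun a => (∑ t ∈ Finset.range T, Pd (p u η t) a) / T, ⟨?_, ?_⟩, ?_⟩
  · intro a
    apply div_nonneg _ hTpos.le
    exact Finset.sum_nonneg fun t _ => Pd_nonneg (fun i j => p_nonneg u η hm t i j) a
  · rw [← Finset.sum_div, Finset.sum_comm]
    rw [Finset.sum_congr rfl fun t _ => sum_Pd (p_sum u η hm t)]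
    simp [div_self hTpos.ne']
  · intro i j
    have key : ∀ t : ℕ, ∑ a, Pd (p u η t) a * (u i (Function.update a i j) - u i a)
        = g u η t i j - IP u η t i := by
      intro t
      simp_rw [mul_sub, Finset.sum_sub_distrib]
      congr 1
      rw [marg (p u η t) (p_sum u η hm t) i (u i)]
      rfl
    have lhs_eq : ∑ a, ((∑ t ∈ Finset.range T, Pd (p u η t) a) / T)
          * (u i (Function.update a i j) - u i a)
        = (∑ t ∈ Finset.range T, (g u η t i j - IP u η t i)) / T := by
      simp_rw [div_mul_eq_mul_div, Finset.sum_mul, ← Finset.sum_div]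
      congr 1
      rw [Finset.sum_comm]
      exact Finset.sum_congr rfl fun t _ => key t
    rw [lhs_eq, div_le_iff₀ hTpos, Finset.sum_sub_distrib]
    have hb := regret_sum_bound u η hm hu hη T i j
    have h1 : Real.log m / η ≤ δ/2 * T := by
      rw [hηdef, div_le_iff₀ (by positivity : (0:ℝ) < δ/2)]
      nlinarith [hT4']
    have h2 : 3/4 * η * T ≤ δ/2 * T := by
      rw [hηdef]
      nlinarith [hTpos.le]
    linarith

end MWU

/-- Every finite game has an exact coarse correlated equilibrium. -/
lemma exists_cce_zero (hm : 0 < m) (u : Fin n → (Fin n → Fin m) → ℝ)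
    (hu : ∀ i a, 0 ≤ u i a ∧ u i a ≤ 1) :
    ∃ x : (Fin n → Fin m) → ℝ, IsDist x ∧
      ∀ i j, ∑ a, x a * (u i (Function.update a i j) - u i a) ≤ 0 := by
  set reg : Fin n → Fin m → ((Fin n → Fin m) → ℝ) → ℝ :=
    fun i j x => ∑ a, x a * (u i (Function.update a i j) - u i a) with hregdef
  have hreg_cont : ∀ i j, Continuous (reg i j) := fun i j =>
    continuous_finset_sum Finset.univ fun a _ => (continuous_apply a).mul continuous_const
  set Φ : ((Fin n → Fin m) → ℝ) → ℝ := fun x => ∑ i, ∑ j, max (reg i j x) 0 with hΦdef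
  have hΦ_cont : Continuous Φ :=
    continuous_finset_sum Finset.univ fun i _ =>
      continuous_finset_sum Finset.univ fun j _ => (hreg_cont i j).max continuous_const
  obtain ⟨x₁, hx₁, hx₁reg⟩ := exists_approx_cce u hm hu one_pos le_rfl
  have hx₁S : x₁ ∈ stdSimplex ℝ (Fin n → Fin m) := ⟨hx₁.1, hx₁.2⟩
  obtain ⟨x₀, hx₀S, hmin⟩ := (isCompact_stdSimplex ℝ (Fin n → Fin m)).exists_isMinOn
    ⟨x₁, hx₁S⟩ hΦ_cont.continuousOn
  have hΦ0 : Φ x₀ ≤ 0 := by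
    by_contra hpos
    push_neg at hpos
    have hnm : (0:ℝ) < n * m := by
      have : 0 < n := by
        by_contra hn0
        push_neg at hn0
        interval_cases n
        · simp [hΦdef] at hpos
      positivity
    set δ : ℝ := min 1 (Φ x₀ / (2 * (n * m))) with hδdef
    have hδpos : 0 < δ := lt_min one_pos (by positivity)
    have hδ1 : δ ≤ 1 := min_le_left _ _
    obtain ⟨xδ, hxδ, hxδreg⟩ := exists_approx_cce u hm hu hδpos hδ1
    have hΦδ : Φ xδ ≤ n * m * δ := by
      calc Φ xδ ≤ ∑ i : Fin n, ∑ j : Fin m, δ := by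
            apply Finset.sum_le_sum
            intro i _
            apply Finset.sum_le_sum
            intro j _
            exact max_le (hxδreg i j) hδpos.le
        _ = n * m * δ := by simp [mul_assoc]
    have h1 : Φ x₀ ≤ Φ xδ := hmin ⟨hxδ.1, hxδ.2⟩
    have h2 : n * m * δ ≤ Φ x₀ / 2 := by
      calc (n:ℝ) * m * δ ≤ n * m * (Φ x₀ / (2 * (n * m))) :=
            mul_le_mul_of_nonneg_left (min_le_right _ _) hnm.le
        _ = Φ x₀ / 2 := by
            rw [mul_div_assoc', mul_comm (2:ℝ), ← div_div, mul_div_cancel_left₀ _ hnm.ne']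
    linarith
  refine ⟨x₀, ⟨hx₀S.1, hx₀S.2⟩, fun i j => ?_⟩
  have hterm : max (reg i j x₀) 0 ≤ Φ x₀ := by
    calc max (reg i j x₀) 0 ≤ ∑ j', max (reg i j' x₀) 0 :=
          Finset.single_le_sum (f := fun j' => max (reg i j' x₀) 0)
            (fun j' _ => le_max_right _ _) (Finset.mem_univ j)
      _ ≤ Φ x₀ :=
          Finset.single_le_sum (f := fun i' => ∑ j', max (reg i' j' x₀) 0)
            (fun i' _ => Finset.sum_nonneg fun j' _ => le_max_right _ _)
            (Finset.mem_univ i)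
  have := (le_max_left (reg i j x₀) 0).trans (hterm.trans hΦ0)
  exact this

lemma exp_convex_bound {r lam : ℝ} (h1 : -1 ≤ r) (h2 : r ≤ 1) :
    Real.exp (lam * r) ≤ Real.cosh lam + r * Real.sinh lam := by
  have ha : (0:ℝ) ≤ (1 - r)/2 := by linarith
  have hb : (0:ℝ) ≤ (1 + r)/2 := by linarith
  have hab : (1 - r)/2 + (1 + r)/2 = 1 := by ring
  have hc := convexOn_exp.2 (Set.mem_univ (-lam)) (Set.mem_univ lam) ha hb hab
  simp only [smul_eq_mul] at hc
  have heq : (1 - r)/2 * (-lam) + (1 + r)/2 * lam = lam * r := by ring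
  rw [heq] at hc
  calc Real.exp (lam * r) ≤ (1 - r)/2 * Real.exp (-lam) + (1 + r)/2 * Real.exp lam := hc
    _ = Real.cosh lam + r * Real.sinh lam := by
        rw [Real.cosh_eq, Real.sinh_eq]; ring

end Stmt6Aux

open Stmt6Aux
/-- Every `n`-player `m`-action game admits a `k`-uniform distribution
on the action profiles that is an `ε`-coarse correlated equilibrium, for every
`ε ∈ (0,1)` and every integer `k > (2/ε²)(ln m + ln n)`. -/
theorem stmt6 {n m : ℕ} (hn : 0 < n) (hm : 0 < m)
    (u : Fin n → (Fin n → Fin m) → ℝ)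
    (hu : ∀ i a, 0 ≤ u i a ∧ u i a ≤ 1)
    (ε : ℝ) (hε : 0 < ε ∧ ε < 1)
    (k : ℕ) (hk : (k : ℝ) > 2 / ε ^ 2 * (Real.log m + Real.log n)) :
    ∃ x : (Fin n → Fin m) → ℝ, IsDist x ∧ IsKUniform k x ∧ IsCCE u x ε := by
  obtain ⟨hε0, hε1⟩ := hε
  obtain ⟨x, hxd, hx0⟩ := exists_cce_zero hm u hu
  set r : Fin n → Fin m → (Fin n → Fin m) → ℝ :=
    fun i j a => u i (Function.update a i j) - u i a with hrdef
  have hr1 : ∀ i j a, -1 ≤ r i j a ∧ r i j a ≤ 1 := by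
    intro i j a
    constructor
    · have := (hu i (Function.update a i j)).1
      have := (hu i a).2
      simp only [hrdef]; linarith
    · have := (hu i (Function.update a i j)).2
      have := (hu i a).1
      simp only [hrdef]; linarith
  have hlogm : 0 ≤ Real.log m := Real.log_nonneg (by exact_mod_cast hm)
  have hlogn : 0 ≤ Real.log n := Real.log_nonneg (by exact_mod_cast hn)
  have hkpos : 0 < k := by
    by_contra hk0
    push_neg at hk0
    interval_cases k
    simp only [Nat.cast_zero] at hk
    have h1 : (0:ℝ) ≤ 2 / ε^2 * (Real.log m + Real.log n) :=
      mul_nonneg (by positivity) (by linarith)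
    linarith
  have hkR : (0:ℝ) < k := by exact_mod_cast hkpos
  -- the bad events
  set Bad : Fin n → Fin m → (Fin k → (Fin n → Fin m)) → Prop :=
    fun i j v => (ε * k < ∑ t, r i j (v t)) with hBaddef
  -- per-pair Chernoff bound
  have chernoff : ∀ (i : Fin n) (j : Fin m),
      ∑ v : Fin k → (Fin n → Fin m), (∏ t, x (v t)) * (if Bad i j v then 1 else 0)
        ≤ Real.exp (-(k * ε^2) / 2) := by
    intro i j
    set h : (Fin n → Fin m) → ℝ := fun a => x a * Real.exp (ε * r i j a) with hhdef
    have step_a : ∀ v : Fin k → (Fin n → Fin m),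
        (∏ t, x (v t)) * (if Bad i j v then 1 else 0)
          ≤ Real.exp (-(k * ε^2)) * ∏ t, h (v t) := by
      intro v
      have hprodx : (0:ℝ) ≤ ∏ t, x (v t) := Finset.prod_nonneg fun t _ => hxd.1 _
      have hexpand : Real.exp (-(k * ε^2)) * ∏ t, h (v t)
          = (∏ t, x (v t)) * Real.exp (ε * (∑ t, r i j (v t)) - k * ε^2) := by
        simp only [hhdef]
        rw [Finset.prod_mul_distrib, ← Real.exp_sum, Finset.mul_sum,
          mul_left_comm, ← Real.exp_add]
        congr 2
        ring
      rw [hexpand]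
      by_cases hb : Bad i j v
      · simp only [hb, if_true, mul_one]
        apply le_mul_of_one_le_right hprodx
        rw [← Real.exp_zero]
        apply Real.exp_le_exp.mpr
        have := hb
        simp only [hBaddef] at this
        nlinarith
      · simp only [hb, if_false, mul_zero]
        positivity
    have step_b : ∑ v : Fin k → (Fin n → Fin m), ∏ t, h (v t)
        = (∑ a, h a) ^ k := (Fintype.sum_pow h k).symm
    have step_c : ∑ a, h a ≤ Real.cosh ε := by
      calc ∑ a, h a ≤ ∑ a, x a * (Real.cosh ε + r i j a * Real.sinh ε) := by
            apply Finset.sum_le_sum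
            intro a _
            exact mul_le_mul_of_nonneg_left
              (exp_convex_bound (hr1 i j a).1 (hr1 i j a).2) (hxd.1 a)
        _ = Real.cosh ε + (∑ a, x a * r i j a) * Real.sinh ε := by
            simp_rw [mul_add, Finset.sum_add_distrib, ← mul_assoc]
            rw [← Finset.sum_mul, ← Finset.sum_mul, hxd.2, one_mul]
        _ ≤ Real.cosh ε := by
            have hsinh : 0 ≤ Real.sinh ε := by
              rw [Real.sinh_eq]
              have := Real.exp_le_exp.mpr (by linarith : -ε ≤ ε)
              linarith
            have hμ : (∑ a, x a * r i j a) ≤ 0 := hx0 i j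
            nlinarith
    have hhnn : (0:ℝ) ≤ ∑ a, h a :=
      Finset.sum_nonneg fun a _ => mul_nonneg (hxd.1 a) (Real.exp_pos _).le
    calc ∑ v : Fin k → (Fin n → Fin m), (∏ t, x (v t)) * (if Bad i j v then 1 else 0)
        ≤ ∑ v : Fin k → (Fin n → Fin m), Real.exp (-(k * ε^2)) * ∏ t, h (v t) :=
          Finset.sum_le_sum fun v _ => step_a v
      _ = Real.exp (-(k * ε^2)) * (∑ a, h a) ^ k := by
          rw [← Finset.mul_sum, step_b]
      _ ≤ Real.exp (-(k * ε^2)) * Real.cosh ε ^ k := by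
          apply mul_le_mul_of_nonneg_left _ (Real.exp_pos _).le
          exact pow_le_pow_left₀ hhnn step_c k
      _ ≤ Real.exp (-(k * ε^2)) * Real.exp (ε^2 / 2) ^ k := by
          apply mul_le_mul_of_nonneg_left _ (Real.exp_pos _).le
          exact pow_le_pow_left₀ (Real.cosh_pos _).le (Real.cosh_le_exp_half_sq ε) k
      _ = Real.exp (-(k * ε^2) / 2) := by
          rw [← Real.exp_nat_mul, ← Real.exp_add]
          congr 1
          ring
  -- union bound and existence of a good sample
  have total : ∑ v : Fin k → (Fin n → Fin m), ∏ t, x (v t) = 1 := by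
    rw [← Fintype.sum_pow x k, hxd.2, one_pow]
  have union : ∑ v : Fin k → (Fin n → Fin m),
      (∏ t, x (v t)) * (if ∃ i j, Bad i j v then 1 else 0)
        ≤ n * m * Real.exp (-(k * ε^2) / 2) := by
    calc ∑ v : Fin k → (Fin n → Fin m), (∏ t, x (v t)) * (if ∃ i j, Bad i j v then 1 else 0)
        ≤ ∑ v : Fin k → (Fin n → Fin m), ∑ i, ∑ j,
            (∏ t, x (v t)) * (if Bad i j v then 1 else 0) := by
          apply Finset.sum_le_sum
          intro v _
          have hprodx : (0:ℝ) ≤ ∏ t, x (v t) := Finset.prod_nonneg fun t _ => hxd.1 _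
          by_cases hb : ∃ i j, Bad i j v
          · obtain ⟨i₀, j₀, hij⟩ := hb
            rw [if_pos ⟨i₀, j₀, hij⟩, mul_one]
            calc (∏ t, x (v t)) = (∏ t, x (v t)) * (if Bad i₀ j₀ v then 1 else 0) := by
                  rw [if_pos hij, mul_one]
              _ ≤ ∑ j, (∏ t, x (v t)) * (if Bad i₀ j v then 1 else 0) :=
                  Finset.single_le_sum (f := fun j => (∏ t, x (v t)) * (if Bad i₀ j v then 1 else 0))
                    (fun j _ => by positivity) (Finset.mem_univ j₀)
              _ ≤ ∑ i, ∑ j, (∏ t, x (v t)) * (if Bad i j v then 1 else 0) :=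
                  Finset.single_le_sum
                    (f := fun i => ∑ j, (∏ t, x (v t)) * (if Bad i j v then 1 else 0))
                    (fun i _ => Finset.sum_nonneg fun j _ => by positivity)
                    (Finset.mem_univ i₀)
          · rw [if_neg hb, mul_zero]
            exact Finset.sum_nonneg fun i _ => Finset.sum_nonneg fun j _ => by positivity
      _ = ∑ i, ∑ j, ∑ v : Fin k → (Fin n → Fin m),
            (∏ t, x (v t)) * (if Bad i j v then 1 else 0) := by
          rw [Finset.sum_comm]
          exact Finset.sum_congr rfl fun i _ => Finset.sum_comm
      _ ≤ ∑ i : Fin n, ∑ j : Fin m, Real.exp (-(k * ε^2) / 2) :=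
          Finset.sum_le_sum fun i _ => Finset.sum_le_sum fun j _ => chernoff i j
      _ = n * m * Real.exp (-(k * ε^2) / 2) := by
          simp [mul_assoc]
  have hlt1 : (n:ℝ) * m * Real.exp (-(k * ε^2) / 2) < 1 := by
    have hlogsum : Real.log m + Real.log n < k * ε^2 / 2 := by
      have h2 : 2 / ε^2 * (Real.log m + Real.log n) < k := hk
      have h4 := mul_lt_mul_of_pos_right h2 (by positivity : (0:ℝ) < ε^2/2)
      have h5 : 2 / ε^2 * (Real.log m + Real.log n) * (ε^2/2)
          = Real.log m + Real.log n := by field_simp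
      rw [h5] at h4
      linarith
    have hn' : (0:ℝ) < (n:ℝ) := by exact_mod_cast hn
    have hm' : (0:ℝ) < (m:ℝ) := by exact_mod_cast hm
    have h3 : (n:ℝ) * m < Real.exp (k * ε^2 / 2) := by
      calc (n:ℝ) * m = Real.exp (Real.log ((n:ℝ) * m)) := (Real.exp_log (by positivity)).symm
        _ < Real.exp (k * ε^2 / 2) := by
            apply Real.exp_lt_exp.mpr
            rw [Real.log_mul hn'.ne' hm'.ne']
            linarith
    rw [show -((k:ℝ) * ε^2) / 2 = -((k:ℝ) * ε^2 / 2) by ring, Real.exp_neg,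
      ← div_eq_mul_inv, div_lt_one (Real.exp_pos _)]
    exact h3
  -- existence of a good sample
  have hgood : ∃ v : Fin k → (Fin n → Fin m), ∀ i j, ¬ Bad i j v := by
    by_contra hall
    push_neg at hall
    have htot : ∑ v : Fin k → (Fin n → Fin m),
        (∏ t, x (v t)) * (if ∃ i j, Bad i j v then 1 else 0) = 1 := by
      have hcongr : ∀ v ∈ (Finset.univ : Finset (Fin k → (Fin n → Fin m))),
          (∏ t, x (v t)) * (if ∃ i j, Bad i j v then 1 else 0) = ∏ t, x (v t) := by
        intro v _
        obtain ⟨i₀, j₀, hij⟩ := hall v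
        rw [if_pos ⟨i₀, j₀, hij⟩, mul_one]
      rw [Finset.sum_congr rfl hcongr, total]
    rw [htot] at union
    linarith
  obtain ⟨v, hv⟩ := hgood
  have hcard : ∑ p : Fin n → Fin m, ((Finset.univ.filter fun t => v t = p).card : ℝ)
      = (k : ℝ) := by
    rw [← Nat.cast_sum]
    norm_cast
    rw [← Finset.card_eq_sum_card_fiberwise (fun t _ => Finset.mem_univ (v t))]
    simp
  refine ⟨empJoint k v, ⟨?_, ?_⟩, fun a => ⟨_, rfl⟩, ?_⟩
  · intro a
    unfold empJoint
    positivity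
  · unfold empJoint
    rw [← Finset.sum_div, hcard, div_self hkR.ne']
  · intro i j
    have key : ∑ a, empJoint k v a * (u i (Function.update a i j) - u i a)
        = (∑ t, r i j (v t)) / k := by
      unfold empJoint
      simp_rw [div_mul_eq_mul_div, ← Finset.sum_div]
      congr 1
      calc ∑ p : Fin n → Fin m, ((Finset.univ.filter fun t => v t = p).card : ℝ) * r i j p
          = ∑ p : Fin n → Fin m, ∑ t ∈ Finset.univ.filter fun t => v t = p, r i j (v t) := by
            apply Finset.sum_congr rfl
            intro p _
            rw [Finset.sum_congr rfl fun t ht => by rw [(Finset.mem_filter.mp ht).2]]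
            rw [Finset.sum_const, nsmul_eq_mul]
        _ = ∑ t, r i j (v t) :=
            Finset.sum_fiberwise_of_maps_to (fun t _ => Finset.mem_univ (v t)) _
    rw [key, div_le_iff₀ hkR]
    have hnb := hv i j
    simp only [hBaddef, not_lt] at hnb
    linarith
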